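/- Let r ≥ 2 and k = C(r,2), let C be a k×r binary matrix whose rows are pairwise distinct and each of Hamming weight 2, let E = C·Cᵀ − 2I_k, and let Q₁(r) = [[I_k, C, E], [0, I_r, Cᵀ]] be the corresponding (k+r) × (2k+r) block matrix. Then for every nonzero vector x ∈ {-1,0,1}^{2k+r}, the integer vector Q₁(r)·x has at least one entry not divisible by 4. -/

import Mathlib

/-- With `Q₁(r)` as in Statement 4, for every nonzero `{-1,0,1}`-valued
vector `x`, the integer vector `Q₁(r)·x` has at least one entry not divisible by 4. -/
theorem stmt6 (r k : ℕ) (hr : 2 ≤ r) (hk : k = r.choose 2)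
    (C : Matrix (Fin k) (Fin r) ℤ)
    (hCbin : ∀ i j, C i j = 0 ∨ C i j = 1)
    (hdistinct : Function.Injective (fun i : Fin k => (fun j => C i j)))
    (hweight : ∀ i, (∑ j, C i j) = 2)
    (E : Matrix (Fin k) (Fin k) ℤ)
    (hE : E = C * C.transpose - 2)
    (Q : Matrix (Fin k ⊕ Fin r) (Fin k ⊕ (Fin r ⊕ Fin k)) ℤ)
    (hQ : Q = Matrix.fromBlocks 1 (Matrix.fromCols C E) 0
      (Matrix.fromCols 1 C.transpose)) :
    ∀ x : Fin k ⊕ (Fin r ⊕ Fin k) → ℤ, (∀ j, x j = -1 ∨ x j = 0 ∨ x j = 1) → x ≠ 0 →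
      ∃ i, ¬ ((4 : ℤ) ∣ Q.mulVec x i) := by
  intro x hx hne
  by_contra h
  push_neg at h
  apply hne
  subst hQ hE
  set a : Fin k → ℤ := fun i => x (Sum.inl i) with ha
  set b : Fin r → ℤ := fun j => x (Sum.inr (Sum.inl j)) with hb
  set c : Fin k → ℤ := fun i => x (Sum.inr (Sum.inr i)) with hc
  -- bottom rows
  have hbot : ∀ j : Fin r, (4:ℤ) ∣ (b j + ∑ i, C i j * c i) := by
    intro j
    have := h (Sum.inr j)
    simp only [Matrix.mulVec, dotProduct, Fintype.sum_sum_type,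
      Matrix.fromBlocks_apply₂₁, Matrix.fromBlocks_apply₂₂,
      Matrix.fromCols_apply_inl, Matrix.fromCols_apply_inr, Matrix.zero_apply,
      Matrix.one_apply, Matrix.transpose_apply, zero_mul, Finset.sum_const_zero,
      zero_add, ite_mul, one_mul, Finset.sum_ite_eq, Finset.mem_univ, if_true] at this
    exact this
  -- top rows
  have htop : ∀ i : Fin k, (4:ℤ) ∣ (a i - 2 * c i) := by
    intro i
    have h1 := h (Sum.inl i)
    have hsum : (4:ℤ) ∣ ∑ j, C i j * (b j + ∑ i', C i' j * c i') :=
      Finset.dvd_sum fun j _ => Dvd.dvd.mul_left (hbot j) _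
    have e1 : ∑ i', (C * C.transpose) i i' * c i' = ∑ j, C i j * ∑ i', C i' j * c i' := by
      simp only [Matrix.mul_apply, Matrix.transpose_apply, Finset.sum_mul, Finset.mul_sum]
      rw [Finset.sum_comm]
      apply Finset.sum_congr rfl; intros; apply Finset.sum_congr rfl; intros; ring
    have e2 : ∑ i', (2 : Matrix (Fin k) (Fin k) ℤ) i i' * c i' = 2 * c i := by
      have h2 : ∀ i', (2 : Matrix (Fin k) (Fin k) ℤ) i i' = if i = i' then 2 else 0 := by
        have ht : (2 : Matrix (Fin k) (Fin k) ℤ) = 1 + 1 := by norm_num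
        intro i'
        rw [ht]
        by_cases hii : i = i' <;> simp [Matrix.one_apply, hii]
      simp [h2, ite_mul]
    have heq : Matrix.mulVec
        (Matrix.fromBlocks 1 (Matrix.fromCols C (C * C.transpose - 2)) 0
          (Matrix.fromCols 1 C.transpose)) x (Sum.inl i)
        = (a i - 2 * c i) + ∑ j, C i j * (b j + ∑ i', C i' j * c i') := by
      simp only [Matrix.mulVec, dotProduct, Fintype.sum_sum_type,
        Matrix.fromBlocks_apply₁₁, Matrix.fromBlocks_apply₁₂,
        Matrix.fromCols_apply_inl, Matrix.fromCols_apply_inr,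
        Matrix.one_apply, Matrix.sub_apply, ite_mul, one_mul, zero_mul,
        Finset.sum_ite_eq, Finset.mem_univ, if_true, sub_mul,
        Finset.sum_sub_distrib, mul_add, Finset.sum_add_distrib]
      rw [e1, e2]
      ring
    rw [heq] at h1
    have := (Int.dvd_add_right hsum).mp (by rwa [add_comm] at h1)
    exact this
  have hac : ∀ i, a i = 0 ∧ c i = 0 := by
    intro i
    have h1 := htop i
    have h2 : a i = -1 ∨ a i = 0 ∨ a i = 1 := hx (Sum.inl i)
    have h3 : c i = -1 ∨ c i = 0 ∨ c i = 1 := hx (Sum.inr (Sum.inr i))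
    omega
  have hbz : ∀ j, b j = 0 := by
    intro j
    have h1 := hbot j
    have h2 : b j = -1 ∨ b j = 0 ∨ b j = 1 := hx (Sum.inr (Sum.inl j))
    have : ∀ i, C i j * c i = 0 := fun i => by rw [(hac i).2, mul_zero]
    simp only [this, Finset.sum_const_zero, add_zero] at h1
    omega
  funext p
  match p with
  | Sum.inl i => exact (hac i).1
  | Sum.inr (Sum.inl j) => exact hbz j
  | Sum.inr (Sum.inr i) => exact (hac i).2
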